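/- Let R be a commutative ring in which every finitely generated ideal has only finitely many minimal primes (an FGFC ring), and let I be an ideal of R with ht(I) ≥ k for some natural number k. Then there exist elements x_1, …, x_k ∈ I such that ht((x_1, …, x_i)R) ≥ i for each i ∈ {1, …, k}. -/

import Mathlib

/-- The height of an ideal: the infimum of the heights of the prime ideals containing it
(the infimum over the empty set being `∞`). -/
noncomputable def idealHeight (R : Type*) [CommRing R] (I : Ideal R) : ℕ∞ :=
  ⨅ (P : PrimeSpectrum R) (_ : I ≤ P.asIdeal), Order.height P

theorem exists_sequence_of_heights_in_FGFC
    (R : Type*) [CommRing R]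
    (hFGFC : ∀ I : Ideal R, I.FG → I.minimalPrimes.Finite)
    (I : Ideal R) (k : ℕ) (hk : (k : ℕ∞) ≤ idealHeight R I) :
    ∃ x : ℕ → R, (∀ i < k, x i ∈ I) ∧
      ∀ i : ℕ, 1 ≤ i → i ≤ k →
        (i : ℕ∞) ≤ idealHeight R (Ideal.span (x '' {j : ℕ | j < i})) := by
  classical
  suffices H : ∀ m : ℕ, m ≤ k → ∃ x : ℕ → R, (∀ i < m, x i ∈ I) ∧
      ∀ i : ℕ, 1 ≤ i → i ≤ m →
        (i : ℕ∞) ≤ idealHeight R (Ideal.span (x '' {j : ℕ | j < i})) by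
    exact H k le_rfl
  intro m
  induction m with
  | zero => exact fun _ => ⟨fun _ => 0, by omega, by omega⟩
  | succ m ih =>
    intro hm1
    obtain ⟨x, hx1, hx2⟩ := ih (by omega)
    set J := Ideal.span (x '' {j : ℕ | j < m}) with hJdef
    have hJfg : J.FG := Submodule.fg_span (Set.Finite.image _ (Set.finite_Iio m))
    have hSfin : J.minimalPrimes.Finite := hFGFC J hJfg
    have hJht : (m : ℕ∞) ≤ idealHeight R J := by
      rcases Nat.eq_zero_or_pos m with h | h
      · simp [h]
      · exact hx2 m h le_rfl
    -- the "bad" primes: minimal primes of J of height ≤ m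
    set T : Set (PrimeSpectrum R) :=
      {P | P.asIdeal ∈ J.minimalPrimes ∧ Order.height P ≤ (m : ℕ∞)} with hTdef
    have hTfin : T.Finite := by
      have hinj : Function.Injective (PrimeSpectrum.asIdeal (R := R)) := by
        intro a b h; cases a; cases b; simpa using h
      have : (PrimeSpectrum.asIdeal ⁻¹' J.minimalPrimes).Finite :=
        hSfin.preimage hinj.injOn
      exact this.subset fun P hP => hP.1
    -- I is not contained in any bad prime
    have hnotin : ∀ P ∈ hTfin.toFinset, ¬ I ≤ P.asIdeal := by
      intro P hP hle
      rw [Set.Finite.mem_toFinset] at hP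
      have h1 : idealHeight R I ≤ Order.height P := iInf₂_le P hle
      have h2 : ((m + 1 : ℕ) : ℕ∞) ≤ (m : ℕ∞) :=
        le_trans (le_trans (by exact_mod_cast Nat.cast_le.mpr hm1) hk) (le_trans h1 hP.2)
      rw [Nat.cast_le] at h2
      omega
    -- prime avoidance: find y ∈ I outside all bad primes
    have hav : ∃ y ∈ I, ∀ P ∈ hTfin.toFinset, y ∉ P.asIdeal := by
      rcases Finset.eq_empty_or_nonempty hTfin.toFinset with he | ⟨P0, hP0⟩
      · exact ⟨0, I.zero_mem, by simp [he]⟩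
      · by_contra hcon
        push_neg at hcon
        have hsub : (I : Set R) ⊆ ⋃ P ∈ (↑hTfin.toFinset : Set (PrimeSpectrum R)), P.asIdeal := by
          intro y hy
          obtain ⟨P, hP, hyP⟩ := hcon y hy
          exact Set.mem_biUnion hP hyP
        have hprime : ∀ P ∈ hTfin.toFinset, P ≠ P0 → P ≠ P0 → P.asIdeal.IsPrime :=
          fun P _ _ _ => P.isPrime
        obtain ⟨P, hP, hle⟩ := (Ideal.subset_union_prime P0 P0 hprime).mp hsub
        exact hnotin P hP hle
    obtain ⟨y, hyI, hy⟩ := hav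
    -- the new sequence
    refine ⟨Function.update x m y, ?_, ?_⟩
    · intro i hi
      rcases Nat.lt_or_ge i m with h | h
      · rw [Function.update_of_ne (by omega)]; exact hx1 i h
      · have : i = m := by omega
        subst this; rw [Function.update_self]; exact hyI
    · intro i hi1 hi2
      have himg : ∀ n ≤ m, Function.update x m y '' {j : ℕ | j < n} = x '' {j : ℕ | j < n} := by
        intro n hn
        apply Set.image_congr
        intro j hj
        exact Function.update_of_ne (by simp only [Set.mem_setOf_eq] at hj; omega) _ _
      rcases Nat.lt_or_ge i (m + 1) with h | h
      · rw [himg i (by omega)]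
        exact hx2 i hi1 (by omega)
      · have hieq : i = m + 1 := by omega
        subst hieq
        set J' := Ideal.span (Function.update x m y '' {j : ℕ | j < m + 1}) with hJ'def
        have hJJ' : J ≤ J' := by
          rw [hJdef, ← himg m le_rfl]
          exact Ideal.span_mono (Set.image_mono (fun j hj => by
            simp only [Set.mem_setOf_eq] at *; omega))
        have hyJ' : y ∈ J' := by
          apply Ideal.subset_span
          exact ⟨m, by simp, Function.update_self m y x⟩
        refine le_iInf fun Q => le_iInf fun hQ => ?_
        obtain ⟨P, hPmin, hPQ⟩ := Ideal.exists_minimalPrimes_le (le_trans hJJ' hQ)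
        have hPprime : P.IsPrime := hPmin.1.1
        set Pp : PrimeSpectrum R := ⟨P, hPprime⟩ with hPpdef
        have hPm : (m : ℕ∞) ≤ Order.height Pp :=
          le_trans hJht (iInf₂_le Pp hPmin.1.2)
        have hgoal : (m : ℕ∞) < Order.height Q := by
          by_cases hle : Order.height Pp ≤ (m : ℕ∞)
          · -- Pp is a bad prime, so y ∉ P
            have hPT : Pp ∈ hTfin.toFinset := by
              rw [Set.Finite.mem_toFinset]; exact ⟨hPmin, hle⟩
            have hyP : y ∉ P := hy Pp hPT
            have hlt : Pp < Q := lt_of_le_of_ne hPQ (by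
              intro h
              exact hyP (by
                rw [show P = Q.asIdeal from congrArg PrimeSpectrum.asIdeal h]
                exact hQ hyJ'))
            have hfin : Order.height Pp < ⊤ :=
              lt_of_le_of_lt hle (by exact_mod_cast WithTop.coe_lt_top (m : ℕ))
            exact lt_of_le_of_lt hPm (Order.height_strictMono hlt hfin)
          · push_neg at hle
            exact lt_of_lt_of_le hle (Order.height_mono hPQ)
        have : (m : ℕ∞) + 1 ≤ Order.height Q :=
          (ENat.add_one_le_iff (by exact_mod_cast WithTop.coe_ne_top)).mpr hgoal
        calc ((m + 1 : ℕ) : ℕ∞) = (m : ℕ∞) + 1 := by push_cast; ring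
        _ ≤ Order.height Q := this
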